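/- Let q : ℝ → ℝ be continuous on [0,1], let I ⊆ ℝ be an open interval, and for each λ ∈ I let u(·,λ) : ℝ → ℝ be twice continuously differentiable on [0,1] and satisfy -∂ₓ²u(x,λ) + q(x)u(x,λ) + λu(x,λ) = 0 for all x ∈ (0,1), with ∂ₓu(0,λ) = -1 and ∂ₓu(1,λ) = 0. Fix b ∈ I and assume that ∫₀¹ u(x,z)u(x,b) dx tends to ∫₀¹ u(x,b)² dx as z → b in I. Then the map λ ↦ λ·u(0,λ) is differentiable at b, with derivative equal to ∫₀¹ (∂ₓu(x,b))² dx + ∫₀¹ q(x)u(x,b)² dx. -/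

import Mathlib

open Set intervalIntegral MeasureTheory Filter

lemma ftc01 {f f' : ℝ → ℝ}
    (hd : ∀ x ∈ Set.Icc (0:ℝ) 1, HasDerivWithinAt f (f' x) (Set.Icc 0 1) x)
    (hc' : ContinuousOn f' (Set.Icc 0 1)) :
    ∫ x in (0:ℝ)..1, f' x = f 1 - f 0 := by
  apply intervalIntegral.integral_eq_sub_of_hasDerivAt_of_le zero_le_one
  · exact fun x hx => (hd x hx).continuousWithinAt
  · intro x hx
    exact (hd x (Set.Ioo_subset_Icc_self hx)).hasDerivAt (Icc_mem_nhds hx.1 hx.2)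
  · exact (hc'.mono (by rw [Set.uIcc_of_le zero_le_one])).intervalIntegrable

lemma congr01 {f g : ℝ → ℝ} (h : ∀ x ∈ Set.Ioo (0:ℝ) 1, f x = g x) :
    ∫ x in (0:ℝ)..1, f x = ∫ x in (0:ℝ)..1, g x := by
  apply intervalIntegral.integral_congr_ae
  have h1 : ({1} : Set ℝ)ᶜ ∈ MeasureTheory.ae (volume : Measure ℝ) := by
    simp [MeasureTheory.mem_ae_iff]
  filter_upwards [h1] with x hx hx'
  rw [Set.uIoc_of_le zero_le_one] at hx'
  exact h x ⟨hx'.1, lt_of_le_of_ne hx'.2 hx⟩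

lemma cint {f : ℝ → ℝ} (h : ContinuousOn f (Set.Icc 0 1)) :
    IntervalIntegrable f MeasureTheory.volume 0 1 :=
  (h.mono (by rw [Set.uIcc_of_le zero_le_one])).intervalIntegrable

/-- If `u(·,λ)` solves the 1D Neumann Schrödinger problem for every `λ` in the
open interval `(a,c)`, and `∫₀¹ u(x,z)u(x,b) dx → ∫₀¹ u(x,b)² dx` as `z → b` in `(a,c)`,
then `λ ↦ λ·u(0,λ)` is differentiable at `b ∈ (a,c)` with derivative
`∫₀¹ (∂ₓu(x,b))² dx + ∫₀¹ q(x)u(x,b)² dx`. -/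
theorem lambda_transfer_function_deriv_eq_stiffness
    (q : ℝ → ℝ) (u u' u'' : ℝ → ℝ → ℝ) (a c b : ℝ)
    (hq : ContinuousOn q (Set.Icc 0 1))
    (hb : b ∈ Set.Ioo a c)
    (hu' : ∀ l ∈ Set.Ioo a c, ∀ x ∈ Set.Icc (0:ℝ) 1,
      HasDerivWithinAt (fun t => u t l) (u' x l) (Set.Icc 0 1) x)
    (hu'' : ∀ l ∈ Set.Ioo a c, ∀ x ∈ Set.Icc (0:ℝ) 1,
      HasDerivWithinAt (fun t => u' t l) (u'' x l) (Set.Icc 0 1) x)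
    (hucont : ∀ l ∈ Set.Ioo a c, ContinuousOn (fun x => u'' x l) (Set.Icc 0 1))
    (hode : ∀ l ∈ Set.Ioo a c, ∀ x ∈ Set.Ioo (0:ℝ) 1,
      -u'' x l + q x * u x l + l * u x l = 0)
    (hbc0 : ∀ l ∈ Set.Ioo a c, u' 0 l = -1)
    (hbc1 : ∀ l ∈ Set.Ioo a c, u' 1 l = 0)
    (hlim : Filter.Tendsto (fun z => ∫ x in (0:ℝ)..1, u x z * u x b)
      (nhdsWithin b (Set.Ioo a c)) (nhds (∫ x in (0:ℝ)..1, (u x b) ^ 2))) :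
    HasDerivAt (fun l => l * u 0 l)
      ((∫ x in (0:ℝ)..1, (u' x b) ^ 2) + ∫ x in (0:ℝ)..1, q x * (u x b) ^ 2) b := by
  -- continuity of u and u' in x
  have hcu : ∀ l ∈ Set.Ioo a c, ContinuousOn (fun x => u x l) (Set.Icc 0 1) :=
    fun l hl x hx => (hu' l hl x hx).continuousWithinAt
  have hcu' : ∀ l ∈ Set.Ioo a c, ContinuousOn (fun x => u' x l) (Set.Icc 0 1) :=
    fun l hl x hx => (hu'' l hl x hx).continuousWithinAt
  -- the key Wronskian identity
  have key : ∀ z ∈ Set.Ioo a c,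
      u 0 b - u 0 z = (z - b) * ∫ x in (0:ℝ)..1, u x z * u x b := by
    intro z hz
    have hW : ∀ x ∈ Set.Icc (0:ℝ) 1, HasDerivWithinAt
        (fun x => u' x z * u x b - u x z * u' x b)
        (u'' x z * u x b - u x z * u'' x b) (Set.Icc 0 1) x := by
      intro x hx
      have h1 := ((hu'' z hz x hx).mul (hu' b hb x hx)).sub
        ((hu' z hz x hx).mul (hu'' b hb x hx))
      exact h1.congr_deriv (by ring)
    have hWc : ContinuousOn (fun x => u'' x z * u x b - u x z * u'' x b) (Set.Icc 0 1) :=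
      ((hucont z hz).mul (hcu b hb)).sub ((hcu z hz).mul (hucont b hb))
    have hint := ftc01 hW hWc
    have hode' : ∀ x ∈ Set.Ioo (0:ℝ) 1,
        u'' x z * u x b - u x z * u'' x b = (z - b) * (u x z * u x b) := by
      intro x hx
      have e1 : u'' x z = q x * u x z + z * u x z := by linarith [hode z hz x hx]
      have e2 : u'' x b = q x * u x b + b * u x b := by linarith [hode b hb x hx]
      rw [e1, e2]; ring
    rw [congr01 hode', intervalIntegral.integral_const_mul] at hint
    rw [hint, hbc0 z hz, hbc0 b hb, hbc1 z hz, hbc1 b hb]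
    ring
  set J : ℝ := ∫ x in (0:ℝ)..1, (u x b) ^ 2 with hJ
  -- stiffness identity at b
  have stiff : (∫ x in (0:ℝ)..1, (u' x b) ^ 2) + (∫ x in (0:ℝ)..1, q x * (u x b) ^ 2)
      = u 0 b - b * J := by
    have hG : ∀ x ∈ Set.Icc (0:ℝ) 1, HasDerivWithinAt
        (fun x => u' x b * u x b)
        (u'' x b * u x b + (u' x b) ^ 2) (Set.Icc 0 1) x := by
      intro x hx
      have h1 := (hu'' b hb x hx).mul (hu' b hb x hx)
      exact h1.congr_deriv (by ring)
    have hGc : ContinuousOn (fun x => u'' x b * u x b + (u' x b) ^ 2) (Set.Icc 0 1) :=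
      ((hucont b hb).mul (hcu b hb)).add ((hcu' b hb).pow 2)
    have hint2 := ftc01 hG hGc
    have i1 : IntervalIntegrable (fun x => u'' x b * u x b) MeasureTheory.volume 0 1 :=
      cint ((hucont b hb).mul (hcu b hb))
    have i2 : IntervalIntegrable (fun x => (u' x b) ^ 2) MeasureTheory.volume 0 1 :=
      cint ((hcu' b hb).pow 2)
    rw [intervalIntegral.integral_add i1 i2, hbc0 b hb, hbc1 b hb] at hint2
    -- now rewrite ∫ u'' u as ∫ q u² + b ∫ u²
    have hode'' : ∀ x ∈ Set.Ioo (0:ℝ) 1,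
        u'' x b * u x b = q x * (u x b) ^ 2 + b * (u x b) ^ 2 := by
      intro x hx
      have e2 : u'' x b = q x * u x b + b * u x b := by linarith [hode b hb x hx]
      rw [e2]; ring
    have i3 : IntervalIntegrable (fun x => q x * (u x b) ^ 2) MeasureTheory.volume 0 1 :=
      cint (hq.mul ((hcu b hb).pow 2))
    have i4 : IntervalIntegrable (fun x => b * (u x b) ^ 2) MeasureTheory.volume 0 1 :=
      cint (continuousOn_const.mul ((hcu b hb).pow 2))
    rw [congr01 hode'', intervalIntegral.integral_add i3 i4,
      intervalIntegral.integral_const_mul] at hint2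
    rw [hJ]
    linarith [hint2]
  rw [stiff, hasDerivAt_iff_tendsto_slope]
  have hmem : Set.Ioo a c ∈ nhdsWithin b {b}ᶜ :=
    mem_nhdsWithin_of_mem_nhds (Ioo_mem_nhds hb.1 hb.2)
  have heq : (slope (fun l => l * u 0 l) b) =ᶠ[nhdsWithin b {b}ᶜ]
      fun z => u 0 b - z * ∫ x in (0:ℝ)..1, u x z * u x b := by
    filter_upwards [hmem, self_mem_nhdsWithin] with z hz hzb
    have hzb' : z - b ≠ 0 := sub_ne_zero.mpr (by simpa using hzb)
    have hk := key z hz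
    rw [slope_def_field]
    field_simp
    linear_combination (-z) * hk
  rw [Filter.tendsto_congr' heq]
  have hIlim : Filter.Tendsto (fun z => ∫ x in (0:ℝ)..1, u x z * u x b)
      (nhdsWithin b {b}ᶜ) (nhds J) :=
    hlim.mono_left (nhdsWithin_le_iff.mpr hmem)
  have hzlim : Filter.Tendsto (fun z : ℝ => z) (nhdsWithin b {b}ᶜ) (nhds b) :=
    tendsto_id.mono_left nhdsWithin_le_nhds
  exact tendsto_const_nhds.sub (hzlim.mul hIlim)
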